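/- Let X and U be nonempty types, let δt > 0 and λ > 0, and set γ := e^(−λ·δt), so that 0 < γ < 1. Let c, r : X × U → ℝ and V : X → ℝ be bounded functions and let σ : X × U → X. Define T_dv[W](x,u) := ( min{ c(x,u), r(x,u) + γ·V(σ(x,u)) + δt·γ·sup_{u' ∈ U} W(σ(x,u), u') } − V(x) ) / δt for bounded W : X × U → ℝ. Then T_dv maps the complete metric space of bounded real-valued functions on X × U (with the supremum metric) into itself, is Lipschitz with constant γ on this space, and hence has a unique bounded fixed point W*; moreover for any bounded W₀, the iterates satisfy ‖T_dv^n[W₀] − W*‖_∞ ≤ γⁿ·‖W₀ − W*‖_∞ for all n, so repeated application of T_dv converges uniformly to W*. -/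

import Mathlib

open BoundedContinuousFunction Filter

private lemma min_lip' (a b c : ℝ) : |min a b - min a c| ≤ |b - c| := by
  rcases le_total a b with h1 | h1 <;> rcases le_total a c with h2 | h2 <;>
    simp [min_eq_left, min_eq_right, h1, h2] <;>
    cases' abs_cases (b - c) with h h <;>
    first
    | { rw [abs_le]; constructor <;> linarith }
    | { rw [abs_sub_comm, abs_le]; constructor <;> linarith }


/-- **Fixed point of the derivative Bellman operator.**
For nonempty `X`, `U`, `δt > 0`, `λ > 0`, `γ = exp (−λ·δt)`, bounded `c r : X × U → ℝ`,
bounded frozen value `V : X → ℝ` and transition map `σ`, the operator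
`T_dv[W](x,u) = (min {c(x,u), r(x,u) + γ·V(σ(x,u)) + δt·γ·sup_{u'} W(σ(x,u),u')} − V(x))/δt`
maps bounded functions on `X × U` to bounded functions, is `γ`-Lipschitz in the
supremum metric, and hence has a unique bounded fixed point `W*`; moreover the
iterates from any bounded `W₀` satisfy `‖T_dv^n[W₀] − W*‖_∞ ≤ γⁿ·‖W₀ − W*‖_∞`,
hence converge uniformly to `W*`. -/
theorem derivative_bellman_fixed_point {X U : Type*} [Nonempty X] [Nonempty U]
    (δt lam : ℝ) (hδt : 0 < δt) (hlam : 0 < lam)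
    (γ : ℝ) (hγ : γ = Real.exp (-(lam * δt)))
    (c r : X × U → ℝ) (V : X → ℝ) (σ : X × U → X)
    (hc : ∃ M, ∀ p, |c p| ≤ M)
    (hr : ∃ M, ∀ p, |r p| ≤ M)
    (hV : ∃ M, ∀ x, |V x| ≤ M)
    (Tdv : (X × U → ℝ) → X × U → ℝ)
    (hTdv : ∀ (W : X × U → ℝ) (p : X × U),
      Tdv W p = (min (c p)
        (r p + γ * V (σ p) + δt * γ * ⨆ u' : U, W (σ p, u')) - V p.1) / δt) :
    -- T_dv maps bounded functions to bounded functions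
    (∀ W : X × U → ℝ, (∃ M, ∀ p, |W p| ≤ M) → ∃ M, ∀ p, |Tdv W p| ≤ M) ∧
    -- T_dv is Lipschitz with constant γ in the supremum metric
    (∀ W₁ W₂ : X × U → ℝ, (∃ M, ∀ p, |W₁ p| ≤ M) → (∃ M, ∀ p, |W₂ p| ≤ M) →
      (⨆ p : X × U, |Tdv W₁ p - Tdv W₂ p|) ≤ γ * ⨆ p : X × U, |W₁ p - W₂ p|) ∧
    -- unique bounded fixed point and geometric convergence of the iterates
    (∃ Wstar : X × U → ℝ, (∃ M, ∀ p, |Wstar p| ≤ M) ∧ Tdv Wstar = Wstar ∧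
      (∀ W : X × U → ℝ, (∃ M, ∀ p, |W p| ≤ M) → Tdv W = W → W = Wstar) ∧
      (∀ W₀ : X × U → ℝ, (∃ M, ∀ p, |W₀ p| ≤ M) → ∀ n : ℕ,
        (⨆ p : X × U, |Tdv^[n] W₀ p - Wstar p|) ≤
          γ ^ n * ⨆ p : X × U, |W₀ p - Wstar p|) ∧
      (∀ W₀ : X × U → ℝ, (∃ M, ∀ p, |W₀ p| ≤ M) →
        TendstoUniformly (fun n : ℕ => Tdv^[n] W₀) Wstar Filter.atTop)) := by
  have hγ0 : 0 < γ := hγ ▸ Real.exp_pos _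
  have hγ1 : γ < 1 := by
    rw [hγ]; exact Real.exp_lt_one_iff.2 (by nlinarith)
  obtain ⟨Mc, hMc⟩ := hc
  obtain ⟨Mr, hMr⟩ := hr
  obtain ⟨Mv, hMv⟩ := hV
  have hMc0 : 0 ≤ Mc := le_trans (abs_nonneg _) (hMc (Classical.arbitrary _))
  have hMr0 : 0 ≤ Mr := le_trans (abs_nonneg _) (hMr (Classical.arbitrary _))
  have hMv0 : 0 ≤ Mv := le_trans (abs_nonneg _) (hMv (Classical.arbitrary _))
  -- bound on the inner sup
  have supb : ∀ (W : X × U → ℝ) (M : ℝ), (∀ p, |W p| ≤ M) → ∀ x : X,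
      |⨆ u' : U, W (x, u')| ≤ M := by
    intro W M hM x
    have bdd : BddAbove (Set.range fun u' : U => W (x, u')) :=
      ⟨M, by rintro _ ⟨u', rfl⟩; exact (abs_le.1 (hM _)).2⟩
    rw [abs_le]
    constructor
    · exact le_trans (abs_le.1 (hM (x, Classical.arbitrary U))).1
        (le_ciSup bdd (Classical.arbitrary U))
    · exact ciSup_le fun u' => (abs_le.1 (hM _)).2
  -- Part 1 : boundedness
  have part1 : ∀ W : X × U → ℝ, (∃ M, ∀ p, |W p| ≤ M) → ∃ M, ∀ p, |Tdv W p| ≤ M := by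
    intro W ⟨M, hM⟩
    have hM0 : 0 ≤ M := le_trans (abs_nonneg _) (hM (Classical.arbitrary _))
    refine ⟨(Mc + (Mr + γ * Mv + δt * γ * M) + Mv) / δt, fun p => ?_⟩
    rw [hTdv, abs_div, abs_of_pos hδt]
    rw [div_le_div_iff_of_pos_right hδt]
    have hS := supb W M hM (σ p)
    have hin : |r p + γ * V (σ p) + δt * γ * ⨆ u' : U, W (σ p, u')|
        ≤ Mr + γ * Mv + δt * γ * M := by
      calc |r p + γ * V (σ p) + δt * γ * ⨆ u' : U, W (σ p, u')|
          ≤ |r p + γ * V (σ p)| + |δt * γ * ⨆ u' : U, W (σ p, u')| := abs_add_le _ _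
        _ ≤ (|r p| + |γ * V (σ p)|) + |δt * γ * ⨆ u' : U, W (σ p, u')| := by
            exact add_le_add (abs_add_le _ _) le_rfl
        _ ≤ Mr + γ * Mv + δt * γ * M := by
            rw [abs_mul, abs_mul, abs_mul, abs_of_pos hγ0, abs_of_pos hδt]
            have := hMr p; have := hMv (σ p)
            have h1 : γ * |V (σ p)| ≤ γ * Mv :=
              mul_le_mul_of_nonneg_left (hMv _) hγ0.le
            have h2 : δt * γ * |⨆ u' : U, W (σ p, u')| ≤ δt * γ * M :=
              mul_le_mul_of_nonneg_left hS (by positivity)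
            linarith
    have hmin : |min (c p) (r p + γ * V (σ p) + δt * γ * ⨆ u' : U, W (σ p, u'))|
        ≤ Mc + (Mr + γ * Mv + δt * γ * M) := by
      rcases min_choice (c p) (r p + γ * V (σ p) + δt * γ * ⨆ u' : U, W (σ p, u')) with h | h <;>
        rw [h]
      · exact le_trans (hMc p) (by nlinarith [mul_nonneg hγ0.le hMv0, mul_nonneg (mul_nonneg hδt.le hγ0.le) hM0])
      · exact le_trans hin (by linarith)
    calc |min (c p) _ - V p.1| ≤ |min (c p) _| + |V p.1| := abs_sub _ _
      _ ≤ Mc + (Mr + γ * Mv + δt * γ * M) + Mv := add_le_add hmin (hMv _)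
  -- key pointwise Lipschitz estimate
  have key : ∀ (W₁ W₂ : X × U → ℝ) (M₁ M₂ : ℝ), (∀ p, |W₁ p| ≤ M₁) →
      (∀ p, |W₂ p| ≤ M₂) → ∀ D : ℝ, (∀ p, |W₁ p - W₂ p| ≤ D) →
      ∀ p, |Tdv W₁ p - Tdv W₂ p| ≤ γ * D := by
    intro W₁ W₂ M₁ M₂ hM₁ hM₂ D hD p
    set S₁ := ⨆ u' : U, W₁ (σ p, u') with hS₁
    set S₂ := ⨆ u' : U, W₂ (σ p, u') with hS₂
    have b₁ : BddAbove (Set.range fun u' : U => W₁ (σ p, u')) :=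
      ⟨M₁, by rintro _ ⟨u', rfl⟩; exact (abs_le.1 (hM₁ _)).2⟩
    have b₂ : BddAbove (Set.range fun u' : U => W₂ (σ p, u')) :=
      ⟨M₂, by rintro _ ⟨u', rfl⟩; exact (abs_le.1 (hM₂ _)).2⟩
    have hS : |S₁ - S₂| ≤ D := by
      rw [abs_le]
      constructor
      · have : S₂ ≤ S₁ + D := ciSup_le fun u' => by
          have := abs_le.1 (hD (σ p, u'))
          have := le_ciSup b₁ u'
          linarith
        linarith
      · have : S₁ ≤ S₂ + D := ciSup_le fun u' => by
          have := abs_le.1 (hD (σ p, u'))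
          have := le_ciSup b₂ u'
          linarith
        linarith
    rw [hTdv, hTdv, div_sub_div_same, sub_sub_sub_cancel_right, abs_div, abs_of_pos hδt,
      div_le_iff₀ hδt]
    calc |min (c p) (r p + γ * V (σ p) + δt * γ * S₁)
          - min (c p) (r p + γ * V (σ p) + δt * γ * S₂)|
        ≤ |(r p + γ * V (σ p) + δt * γ * S₁) - (r p + γ * V (σ p) + δt * γ * S₂)| :=
          min_lip' _ _ _
      _ = δt * γ * |S₁ - S₂| := by
          rw [show (r p + γ * V (σ p) + δt * γ * S₁) - (r p + γ * V (σ p) + δt * γ * S₂)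
              = δt * γ * (S₁ - S₂) by ring, abs_mul, abs_of_pos (by positivity)]
      _ ≤ δt * γ * D := mul_le_mul_of_nonneg_left hS (by positivity)
      _ = γ * D * δt := by ring
  -- Part 2
  have part2 : ∀ W₁ W₂ : X × U → ℝ, (∃ M, ∀ p, |W₁ p| ≤ M) → (∃ M, ∀ p, |W₂ p| ≤ M) →
      (⨆ p : X × U, |Tdv W₁ p - Tdv W₂ p|) ≤ γ * ⨆ p : X × U, |W₁ p - W₂ p| := by
    rintro W₁ W₂ ⟨M₁, hM₁⟩ ⟨M₂, hM₂⟩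
    have bdd : BddAbove (Set.range fun p : X × U => |W₁ p - W₂ p|) :=
      ⟨M₁ + M₂, by rintro _ ⟨p, rfl⟩
                   calc |W₁ p - W₂ p| ≤ |W₁ p| + |W₂ p| := abs_sub _ _
                     _ ≤ M₁ + M₂ := add_le_add (hM₁ p) (hM₂ p)⟩
    exact ciSup_le (key W₁ W₂ M₁ M₂ hM₁ hM₂ _ (fun p => le_ciSup bdd p))
  refine ⟨part1, part2, ?_⟩
  -- set up the complete metric space of bounded functions
  letI : TopologicalSpace (X × U) := ⊥
  haveI : DiscreteTopology (X × U) := ⟨rfl⟩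
  have mem : ∀ (f : X × U → ℝ), (∃ M, ∀ p, |f p| ≤ M) →
      ∃ g : X × U →ᵇ ℝ, ⇑g = f := by
    rintro f ⟨M, hM⟩
    exact ⟨BoundedContinuousFunction.ofNormedAddCommGroup f continuous_of_discreteTopology M
      (by simpa [Real.norm_eq_abs] using hM), rfl⟩
  have cbd : ∀ g : X × U →ᵇ ℝ, ∃ M, ∀ p, |(⇑g : X × U → ℝ) p| ≤ M :=
    fun g => ⟨‖g‖, fun p => by simpa [Real.norm_eq_abs] using g.norm_coe_le_norm p⟩
  -- the operator on bounded continuous functions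
  have hFex : ∀ g : X × U →ᵇ ℝ, ∃ g' : X × U →ᵇ ℝ, ⇑g' = Tdv ⇑g :=
    fun g => mem _ (part1 _ (cbd g))
  choose F hF using hFex
  have dist_eq : ∀ f g : X × U →ᵇ ℝ, dist f g = ⨆ p : X × U, |f p - g p| := by
    intro f g
    have bdd : BddAbove (Set.range fun p : X × U => |f p - g p|) :=
      ⟨dist f g, by rintro _ ⟨p, rfl⟩
                    show |f p - g p| ≤ dist f g
                    rw [← Real.dist_eq]; exact dist_coe_le_dist p⟩
    apply le_antisymm
    · refine (BoundedContinuousFunction.dist_le ?_).2 fun p => by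
        rw [Real.dist_eq]; exact le_ciSup bdd p
      exact le_trans (abs_nonneg _) (le_ciSup bdd (Classical.arbitrary _))
    · refine ciSup_le fun p => ?_
      show |f p - g p| ≤ dist f g
      rw [← Real.dist_eq]; exact dist_coe_le_dist p
  have distle : ∀ f g : X × U →ᵇ ℝ, ∀ p, |f p - g p| ≤ dist f g :=
    fun f g p => by rw [← Real.dist_eq]; exact dist_coe_le_dist p
  have hC : ContractingWith ⟨γ, hγ0.le⟩ F := by
    constructor
    · exact_mod_cast hγ1
    · apply LipschitzWith.of_dist_le_mul
      intro f g
      refine (BoundedContinuousFunction.dist_le (by positivity)).2 fun p => ?_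
      rw [Real.dist_eq, hF, hF]
      obtain ⟨M₁, hM₁⟩ := cbd f
      obtain ⟨M₂, hM₂⟩ := cbd g
      exact key _ _ M₁ M₂ hM₁ hM₂ (dist f g) (distle f g) p
  haveI : Nonempty (X × U →ᵇ ℝ) := ⟨0⟩
  set Wf := ContractingWith.fixedPoint F hC with hWf
  have hfixBCF : F Wf = Wf := hC.fixedPoint_isFixedPt
  have hfix : Tdv ⇑Wf = ⇑Wf := by rw [← hF Wf, hfixBCF]
  have hiter : ∀ (g : X × U →ᵇ ℝ) (n : ℕ), Tdv^[n] ⇑g = ⇑(F^[n] g) := by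
    intro g n
    induction n with
    | zero => rfl
    | succ n ih => rw [Function.iterate_succ_apply', Function.iterate_succ_apply', ih, hF]
  have hgeo : ∀ (g : X × U →ᵇ ℝ) (n : ℕ), dist (F^[n] g) Wf ≤ γ ^ n * dist g Wf := by
    intro g n
    induction n with
    | zero => simp
    | succ n ih =>
      rw [Function.iterate_succ_apply']
      calc dist (F (F^[n] g)) Wf = dist (F (F^[n] g)) (F Wf) := by rw [hfixBCF]
        _ ≤ γ * dist (F^[n] g) Wf := by
            have := hC.2.dist_le_mul (F^[n] g) Wf
            exact this
        _ ≤ γ * (γ ^ n * dist g Wf) := mul_le_mul_of_nonneg_left ih hγ0.le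
        _ = γ ^ (n + 1) * dist g Wf := by ring
  refine ⟨⇑Wf, cbd Wf, hfix, ?_, ?_, ?_⟩
  · -- uniqueness
    rintro W hWb hWfix
    obtain ⟨g, hg⟩ := mem W hWb
    have : F g = g := by
      apply BoundedContinuousFunction.ext
      intro p
      have : ⇑(F g) = ⇑g := by rw [hF, hg, hWfix]
      exact congrFun this p
    have := hC.fixedPoint_unique this
    rw [← hg, this]
  · -- geometric bound
    rintro W₀ hW₀b n
    obtain ⟨g, hg⟩ := mem W₀ hW₀b
    rw [← hg, hiter, ← dist_eq, ← dist_eq]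
    exact hgeo g n
  · -- uniform convergence
    rintro W₀ hW₀b
    obtain ⟨g, hg⟩ := mem W₀ hW₀b
    have := hC.tendsto_iterate_fixedPoint g
    have h2 := BoundedContinuousFunction.tendsto_iff_tendstoUniformly.1 this
    have heq : (fun n : ℕ => Tdv^[n] W₀) = fun n : ℕ => ⇑(F^[n] g) := by
      funext n; rw [← hg, hiter]
    rw [heq]
    exact h2
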